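/- The cut-rank function of a graph is submodular: for all X, Y ⊆ V(G), ρ_G(X ∪ Y) + ρ_G(X ∩ Y) ≤ ρ_G(X) + ρ_G(Y). -/

import Mathlib

open Submodule Module Matrix

section Aux

variable {F : Type*} [Field F] {M N : Type*} [AddCommGroup M] [Module F M]
  [AddCommGroup N] [Module F N]

lemma finrank_map_add_finrank_inf_ker [FiniteDimensional F M]
    (U : Submodule F M) (f : M →ₗ[F] N) :
    finrank F (U.map f) + finrank F ↥(U ⊓ LinearMap.ker f) = finrank F U := by
  have h := LinearMap.finrank_range_add_finrank_ker (f.domRestrict U)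
  rw [LinearMap.range_domRestrict, LinearMap.ker_domRestrict] at h
  rwa [show finrank F (Submodule.comap U.subtype (LinearMap.ker f))
      = finrank F ↥(U ⊓ LinearMap.ker f) by
    rw [← Submodule.finrank_map_subtype_eq U, Submodule.map_comap_subtype]] at h

lemma finrank_inf_trick [FiniteDimensional F M] {T' T : Submodule F M} (W : Submodule F M)
    (h : T' ≤ T) :
    finrank F ↥(T ⊓ W : Submodule F M) + finrank F T'
      ≤ finrank F ↥(T' ⊓ W : Submodule F M) + finrank F T := by
  have h1 := Submodule.finrank_sup_add_finrank_inf_eq (T ⊓ W) T'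
  have h2 : (T ⊓ W) ⊓ T' = T' ⊓ W := by
    rw [inf_right_comm, inf_eq_right.mpr h]
  rw [h2] at h1
  have h3 : finrank F ↥((T ⊓ W) ⊔ T' : Submodule F M) ≤ finrank F T :=
    Submodule.finrank_mono (sup_le inf_le_left h)
  omega

end Aux

section Main

variable {F : Type*} [Field F] {V : Type*} [Fintype V] [DecidableEq V]

/-- Rank of the submatrix with rows `I` and columns `J`. -/
noncomputable def rnk (A : Matrix V V F) (I J : Finset V) : ℕ :=
  (A.submatrix (fun x : {x : V // x ∈ I} => (x : V))
               (fun y : {y : V // y ∈ J} => (y : V))).rank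

lemma rnk_eq (A : Matrix V V F) (I J : Finset V) :
    rnk A I J = finrank F ↥((Submodule.span F (Aᵀ '' (↑J : Set V))).map
      (LinearMap.funLeft F F (Subtype.val : {x : V // x ∈ I} → V))) := by
  rw [rnk, Matrix.rank_eq_finrank_span_cols]
  have h2 : Set.range (A.submatrix (fun x : {x : V // x ∈ I} => (x : V))
        (fun y : {y : V // y ∈ J} => (y : V))).col
      = (LinearMap.funLeft F F (Subtype.val : {x : V // x ∈ I} → V)) ''
          (Aᵀ '' (↑J : Set V)) := by
    rw [show (A.submatrix (fun x : {x : V // x ∈ I} => (x : V))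
        (fun y : {y : V // y ∈ J} => (y : V))).col
      = (LinearMap.funLeft F F (Subtype.val : {x : V // x ∈ I} → V)) ∘ A.col ∘
          (Subtype.val : {y : V // y ∈ J} → V) from rfl]
    rw [Set.range_comp, Set.range_comp, Subtype.range_coe_subtype, Finset.setOf_mem]
    rfl
  rw [h2]; exact congrArg (fun S : Submodule F _ => finrank F ↥S) (Submodule.span_image _)

lemma mem_kerProj (I : Finset V) (v : V → F) :
    v ∈ LinearMap.ker (LinearMap.funLeft F F (Subtype.val : {x : V // x ∈ I} → V))
      ↔ ∀ i ∈ I, v i = 0 := by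
  simp only [LinearMap.mem_ker, LinearMap.funLeft_apply, funext_iff]
  constructor
  · intro h i hi; exact h ⟨i, hi⟩
  · intro h x; exact h x x.2

lemma key (A : Matrix V V F) (I1 I2 J1 J2 : Finset V) :
    rnk A (I1 ∪ I2) (J1 ∩ J2) + rnk A (I1 ∩ I2) (J1 ∪ J2)
      ≤ rnk A I1 J1 + rnk A I2 J2 := by
  classical
  set U1 := Submodule.span F (Aᵀ '' (↑J1 : Set V)) with hU1
  set U2 := Submodule.span F (Aᵀ '' (↑J2 : Set V)) with hU2
  set Ui := Submodule.span F (Aᵀ '' (↑(J1 ∩ J2) : Set V)) with hUi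
  set Uu := Submodule.span F (Aᵀ '' (↑(J1 ∪ J2) : Set V)) with hUu
  set K1 := LinearMap.ker (LinearMap.funLeft F F (Subtype.val : {x : V // x ∈ I1} → V)) with hK1
  set K2 := LinearMap.ker (LinearMap.funLeft F F (Subtype.val : {x : V // x ∈ I2} → V)) with hK2
  set Ku := LinearMap.ker (LinearMap.funLeft F F (Subtype.val : {x : V // x ∈ I1 ∪ I2} → V)) with hKu
  set Ki := LinearMap.ker (LinearMap.funLeft F F (Subtype.val : {x : V // x ∈ I1 ∩ I2} → V)) with hKi
  -- rank-nullity relations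
  have e1 : rnk A I1 J1 + finrank F ↥(U1 ⊓ K1 : Submodule F (V → F)) = finrank F U1 := by
    rw [rnk_eq]; exact finrank_map_add_finrank_inf_ker _ _
  have e2 : rnk A I2 J2 + finrank F ↥(U2 ⊓ K2 : Submodule F (V → F)) = finrank F U2 := by
    rw [rnk_eq]; exact finrank_map_add_finrank_inf_ker _ _
  have eu : rnk A (I1 ∪ I2) (J1 ∩ J2) + finrank F ↥(Ui ⊓ Ku : Submodule F (V → F))
      = finrank F Ui := by
    rw [rnk_eq]; exact finrank_map_add_finrank_inf_ker _ _
  have ei : rnk A (I1 ∩ I2) (J1 ∪ J2) + finrank F ↥(Uu ⊓ Ki : Submodule F (V → F))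
      = finrank F Uu := by
    rw [rnk_eq]; exact finrank_map_add_finrank_inf_ker _ _
  -- structure of spans and kernels
  have hUusup : Uu = U1 ⊔ U2 := by
    rw [hUu, hU1, hU2, Finset.coe_union, ← Submodule.span_union]
    congr 1; exact Set.image_union _ _ _
  have hUile : Ui ≤ U1 ⊓ U2 := by
    refine le_inf ?_ ?_ <;> apply Submodule.span_mono <;>
      apply Set.image_mono <;> simp [Finset.coe_subset]
  have hK12Ku : K1 ⊓ K2 ≤ Ku := by
    intro v hv
    rw [hKu, mem_kerProj]
    intro i hi
    rcases Finset.mem_union.mp hi with h | h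
    · exact (mem_kerProj I1 v).mp hv.1 i h
    · exact (mem_kerProj I2 v).mp hv.2 i h
  have hK1Ki : K1 ≤ Ki := by
    intro v hv
    rw [hKi, mem_kerProj]
    intro i hi
    exact (mem_kerProj I1 v).mp hv i (Finset.mem_inter.mp hi).1
  -- dimension counting
  have a1 : finrank F ↥((U1 ⊓ K1) ⊔ (U2 ⊓ K2) : Submodule F (V → F))
      + finrank F ↥((U1 ⊓ K1) ⊓ (U2 ⊓ K2) : Submodule F (V → F))
      = finrank F ↥(U1 ⊓ K1 : Submodule F (V → F))
        + finrank F ↥(U2 ⊓ K2 : Submodule F (V → F)) :=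
    Submodule.finrank_sup_add_finrank_inf_eq _ _
  have a2 : finrank F ↥((U1 ⊓ K1) ⊔ (U2 ⊓ K2) : Submodule F (V → F))
      ≤ finrank F ↥(Uu ⊓ Ki : Submodule F (V → F)) := by
    apply Submodule.finrank_mono
    refine sup_le (le_inf ?_ ?_) (le_inf ?_ ?_)
    · exact inf_le_left.trans (hUusup ▸ le_sup_left)
    · exact inf_le_right.trans hK1Ki
    · exact inf_le_left.trans (hUusup ▸ le_sup_right)
    · refine inf_le_right.trans ?_
      intro v hv
      rw [hKi, mem_kerProj]
      intro i hi
      exact (mem_kerProj I2 v).mp hv i (Finset.mem_inter.mp hi).2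
  have a3 : finrank F ↥((U1 ⊓ K1) ⊓ (U2 ⊓ K2) : Submodule F (V → F))
      ≤ finrank F ↥((U1 ⊓ U2) ⊓ Ku : Submodule F (V → F)) := by
    apply Submodule.finrank_mono
    refine le_inf (le_inf (inf_le_left.trans inf_le_left)
      (inf_le_right.trans inf_le_left)) ?_
    exact (le_inf (inf_le_left.trans inf_le_right)
      (inf_le_right.trans inf_le_right)).trans hK12Ku
  have a4 : finrank F ↥((U1 ⊓ U2) ⊓ Ku : Submodule F (V → F)) + finrank F Ui
      ≤ finrank F ↥(Ui ⊓ Ku : Submodule F (V → F)) + finrank F ↥(U1 ⊓ U2 : Submodule F (V → F)) :=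
    finrank_inf_trick Ku hUile
  have a5 : finrank F ↥(U1 ⊓ U2 : Submodule F (V → F)) + finrank F Uu
      = finrank F U1 + finrank F U2 := by
    rw [hUusup, add_comm]
    exact Submodule.finrank_sup_add_finrank_inf_eq U1 U2
  omega

end Main

/-- Cut-rank of a vertex subset `X`: the GF(2) rank of the submatrix of the
adjacency matrix `A` with rows indexed by `X` and columns by its complement. -/
noncomputable def cutRank {V : Type*} [Fintype V] [DecidableEq V]
    (A : Matrix V V (ZMod 2)) (X : Finset V) : ℕ :=
  (A.submatrix (fun x : {x : V // x ∈ X} => (x : V))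
               (fun y : {y : V // y ∉ X} => (y : V))).rank

lemma cutRank_eq_rnk {V : Type*} [Fintype V] [DecidableEq V]
    (A : Matrix V V (ZMod 2)) (X : Finset V) :
    cutRank A X = rnk A X Xᶜ := by
  rw [cutRank, rnk, Matrix.rank_eq_finrank_span_cols, Matrix.rank_eq_finrank_span_cols]
  have : Set.range (A.submatrix (fun x : {x : V // x ∈ X} => (x : V))
               (fun y : {y : V // y ∉ X} => (y : V))).col
      = Set.range (A.submatrix (fun x : {x : V // x ∈ X} => (x : V))
               (fun y : {y : V // y ∈ Xᶜ} => (y : V))).col := by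
    ext f
    simp only [Set.mem_range]
    constructor
    · rintro ⟨y, rfl⟩
      exact ⟨⟨y, Finset.mem_compl.mpr y.2⟩, rfl⟩
    · rintro ⟨y, rfl⟩
      exact ⟨⟨y, Finset.mem_compl.mp y.2⟩, rfl⟩
  rw [this]

/-- The cut-rank function of a graph is submodular:
`ρ(X ∪ Y) + ρ(X ∩ Y) ≤ ρ(X) + ρ(Y)`. -/
theorem stmt6 {V : Type*} [Fintype V] [DecidableEq V]
    (A : Matrix V V (ZMod 2)) (hsymm : A.IsSymm) (hdiag : ∀ v, A v v = 0)
    (X Y : Finset V) :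
    cutRank A (X ∪ Y) + cutRank A (X ∩ Y) ≤ cutRank A X + cutRank A Y := by
  rw [cutRank_eq_rnk, cutRank_eq_rnk, cutRank_eq_rnk, cutRank_eq_rnk,
    Finset.compl_union, Finset.compl_inter]
  exact key A X Y Xᶜ Yᶜ
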